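/- For all d ≥ 6, the inequality C(d, ⌊d/2⌋) + C(d, ⌊d/2⌋+3) > 2^d / √(πd/2) holds, where C(n,k) is the binomial coefficient. -/

import Mathlib

set_option maxHeartbeats 1000000

lemma central_sq : ∀ n : ℕ, 1 ≤ n → (16:ℝ)^n ≤ 4 * n * (Nat.centralBinom n)^2 := by
  intro n
  induction n with
  | zero => intro h; omega
  | succ m ih =>
    intro _
    rcases Nat.eq_zero_or_pos m with hm | hm
    · subst hm; norm_num [Nat.centralBinom]
    · have IH := ih hm
      have h1 : ((m:ℝ) + 1) * (Nat.centralBinom (m+1)) = 2 * (2*m + 1) * Nat.centralBinom m := by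
        exact_mod_cast congrArg (Nat.cast : ℕ → ℝ) (Nat.succ_mul_centralBinom_succ m)
      have hm1 : (1:ℝ) ≤ (m:ℝ) := by exact_mod_cast hm
      have hC : (0:ℝ) ≤ (Nat.centralBinom m : ℝ) := by positivity
      have h16 : (0:ℝ) < 16^m := by positivity
      have hpos : (0:ℝ) < (m:ℝ) + 1 := by positivity
      have hsq : (((m:ℝ)+1) * (Nat.centralBinom (m+1)))^2
          = (2*(2*(m:ℝ)+1) * (Nat.centralBinom m))^2 := by rw [h1]
      have key : ((m:ℝ)+1) * (16^m*16) ≤ ((m:ℝ)+1) * (4*((m:ℝ)+1)*(Nat.centralBinom (m+1):ℝ)^2) := by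
        nlinarith [hsq, mul_le_mul_of_nonneg_left IH (le_of_lt hpos), mul_nonneg hC hC]
      have final := le_of_mul_le_mul_left key hpos
      push_cast
      rw [pow_succ]
      nlinarith [final]

lemma sqrt_red (d : ℕ) (S : ℝ) (hd : 0 < d) (hS : 0 ≤ S)
    (h : 2 * 4^d < Real.pi * d * S^2) :
    (2:ℝ)^d / Real.sqrt (Real.pi * d / 2) < S := by
  have hπ := Real.pi_pos
  have hdr : (0:ℝ) < d := by exact_mod_cast hd
  have hx : (0:ℝ) < Real.pi * d / 2 := by positivity
  rw [div_lt_iff₀ (Real.sqrt_pos.mpr hx)]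
  have h2 : (2:ℝ)^d < Real.sqrt (S^2 * (Real.pi * d / 2)) := by
    refine (Real.lt_sqrt (by positivity : (0:ℝ) ≤ (2:ℝ)^d)).mpr ?_
    have h4 : ((2:ℝ)^d)^2 = 4^d := by
      rw [← pow_mul, mul_comm, pow_mul]; norm_num
    rw [h4]; nlinarith
  calc (2:ℝ)^d < Real.sqrt (S^2 * (Real.pi * d / 2)) := h2
    _ = S * Real.sqrt (Real.pi * d / 2) := by
        rw [Real.sqrt_mul (sq_nonneg S), Real.sqrt_sq hS]

lemma even_ratio (m : ℕ) :
    (2*m+6).choose (m+6) * ((m+4)*(m+5)*(m+6))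
      = (2*m+6).choose (m+3) * ((m+1)*(m+2)*(m+3)) := by
  have e1 := Nat.choose_succ_right_eq (2*m+6) (m+3)
  have e2 := Nat.choose_succ_right_eq (2*m+6) (m+4)
  have e3 := Nat.choose_succ_right_eq (2*m+6) (m+5)
  rw [show 2*m+6-(m+3) = m+3 by omega] at e1
  rw [show 2*m+6-(m+4) = m+2 by omega] at e2
  rw [show 2*m+6-(m+5) = m+1 by omega] at e3
  rw [show m+3+1 = m+4 by omega] at e1
  rw [show m+4+1 = m+5 by omega] at e2
  rw [show m+5+1 = m+6 by omega] at e3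
  calc (2*m+6).choose (m+6) * ((m+4)*(m+5)*(m+6))
      = ((2*m+6).choose (m+6) * (m+6)) * ((m+4)*(m+5)) := by ring
    _ = ((2*m+6).choose (m+5) * (m+5)) * ((m+1)*(m+4)) := by rw [e3]; ring
    _ = ((2*m+6).choose (m+4) * (m+4)) * ((m+1)*(m+2)) := by rw [e2]; ring
    _ = ((2*m+6).choose (m+3) * (m+3)) * ((m+1)*(m+2)) := by rw [e1]
    _ = (2*m+6).choose (m+3) * ((m+1)*(m+2)*(m+3)) := by ring

lemma odd_sym (m : ℕ) : (2*m+7).choose (m+4) = (2*m+7).choose (m+3) := by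
  have := Nat.choose_symm (show m+4 ≤ 2*m+7 by omega)
  rw [show 2*m+7-(m+4) = m+3 by omega] at this
  omega

lemma odd1 (m : ℕ) :
    (2*m+7).choose (m+3) * (m+4) = (2*m+6).choose (m+3) * (2*m+7) := by
  have := Nat.add_one_mul_choose_eq (2*m+6) (m+3)
  rw [show 2*m+6+1 = 2*m+7 by omega, show m+3+1 = m+4 by omega] at this
  rw [odd_sym m] at this
  rw [← this]; ring

lemma odd2 (m : ℕ) :
    (2*m+7).choose (m+6) * ((m+5)*(m+6))
      = (2*m+7).choose (m+3) * ((m+2)*(m+3)) := by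
  have e2 := Nat.choose_succ_right_eq (2*m+7) (m+4)
  have e3 := Nat.choose_succ_right_eq (2*m+7) (m+5)
  rw [show 2*m+7-(m+4) = m+3 by omega, show m+4+1 = m+5 by omega] at e2
  rw [show 2*m+7-(m+5) = m+2 by omega, show m+5+1 = m+6 by omega] at e3
  calc (2*m+7).choose (m+6) * ((m+5)*(m+6))
      = ((2*m+7).choose (m+6) * (m+6)) * (m+5) := by ring
    _ = ((2*m+7).choose (m+5) * (m+5)) * (m+2) := by rw [e3]; ring
    _ = ((2*m+7).choose (m+4)) * ((m+2)*(m+3)) := by rw [e2]; ring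
    _ = (2*m+7).choose (m+3) * ((m+2)*(m+3)) := by rw [odd_sym m]

lemma centralBinom_eq (m : ℕ) : Nat.centralBinom (m+3) = (2*m+6).choose (m+3) := by
  unfold Nat.centralBinom; congr 1 <;> omega

/-- For all `d ≥ 6`, `C(d, ⌊d/2⌋) + C(d, ⌊d/2⌋+3) > 2^d / √(πd/2)`. -/
theorem choose_sum_gt (d : ℕ) (hd : 6 ≤ d) :
    (2 : ℝ) ^ d / Real.sqrt (Real.pi * d / 2) <
      (Nat.choose d (d / 2) : ℝ) + (Nat.choose d (d / 2 + 3) : ℝ) := by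
  rcases Nat.even_or_odd d with ⟨n, hn⟩ | ⟨n, hn⟩
  · -- even case, d = 2m+6
    obtain ⟨m, rfl⟩ : ∃ m, d = 2*m+6 := ⟨n - 3, by omega⟩
    rw [show (2*m+6)/2 = m+3 by omega, show m+3+3 = m+6 by omega]
    apply sqrt_red _ _ (by omega) (by positivity)
    set C : ℝ := ((2*m+6).choose (m+3) : ℝ) with hCdef
    set C3 : ℝ := ((2*m+6).choose (m+6) : ℝ) with hC3def
    have hC : (0:ℝ) < C := by
      rw [hCdef]; exact_mod_cast Nat.choose_pos (by omega : m+3 ≤ 2*m+6)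
    have hA : (16:ℝ)^(m+3) ≤ 4*((m:ℝ)+3)*C^2 := by
      have := central_sq (m+3) (by omega)
      rw [centralBinom_eq m] at this
      push_cast at this ⊢
      convert this using 2 <;> push_cast <;> ring
    set P : ℝ := ((m:ℝ)+4)*((m:ℝ)+5)*((m:ℝ)+6) with hPdef
    set Q : ℝ := ((m:ℝ)+1)*((m:ℝ)+2)*((m:ℝ)+3) with hQdef
    have hR : C3 * P = C * Q := by
      rw [hCdef, hC3def, hPdef, hQdef]
      exact_mod_cast congrArg (Nat.cast : ℕ → ℝ) (even_ratio m)
    have hP : (0:ℝ) < P := by rw [hPdef]; positivity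
    rcases Nat.lt_or_ge m 2 with hm | hm
    · interval_cases m <;>
        norm_num [hCdef, hC3def, Nat.choose] <;>
        nlinarith [Real.pi_gt_d2]
    · have hm2 : (2:ℝ) ≤ (m:ℝ) := by exact_mod_cast hm
      have h5 : 5*P ≤ 28*Q := by
        rw [hPdef, hQdef]
        nlinarith [mul_nonneg (by linarith : (0:ℝ) ≤ (m:ℝ)-2)
          (by positivity : (0:ℝ) ≤ 23*(m:ℝ)^2+139*(m:ℝ)+216)]
      have hpoly : 4*P^2 < Real.pi*(P+Q)^2 := by
        have hQ : (0:ℝ) < Q := by rw [hQdef]; positivity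
        nlinarith [Real.pi_gt_d2, mul_nonneg (by linarith : (0:ℝ) ≤ 28*Q-5*P) hP.le,
          sq_nonneg Q, mul_pos hP hP, sq_nonneg (28*Q-5*P)]
      have hP2 : (0:ℝ) < P^2 := by positivity
      apply lt_of_mul_lt_mul_right _ hP2.le
      have hSP : (C + C3) * P = C * (P+Q) := by linear_combination hR
      have hrw : (Real.pi*((2*m+6:ℕ):ℝ)*(C+C3)^2)*P^2
          = Real.pi*((2*m+6:ℕ):ℝ)*((C+C3)*P)^2 := by ring
      rw [hrw, hSP]
      have h16 : (4:ℝ)^(2*m+6) = 16^(m+3) := by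
        rw [show 2*m+6 = 2*(m+3) by ring, pow_mul]; norm_num
      rw [h16]
      push_cast
      nlinarith [mul_le_mul_of_nonneg_right hA hP2.le,
        mul_lt_mul_of_pos_left hpoly (show (0:ℝ) < 2*((m:ℝ)+3)*C^2 by positivity)]
  · -- odd case, d = 2m+7
    obtain ⟨m, rfl⟩ : ∃ m, d = 2*m+7 := ⟨n - 3, by omega⟩
    rw [show (2*m+7)/2 = m+3 by omega, show m+3+3 = m+6 by omega]
    apply sqrt_red _ _ (by omega) (by positivity)
    set C : ℝ := ((2*m+6).choose (m+3) : ℝ) with hCdef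
    set C1 : ℝ := ((2*m+7).choose (m+3) : ℝ) with hC1def
    set C3 : ℝ := ((2*m+7).choose (m+6) : ℝ) with hC3def
    have hC : (0:ℝ) < C := by
      rw [hCdef]; exact_mod_cast Nat.choose_pos (by omega : m+3 ≤ 2*m+6)
    have h1 : C1 * ((m:ℝ)+4) = C * (2*(m:ℝ)+7) := by
      rw [hCdef, hC1def]
      exact_mod_cast congrArg (Nat.cast : ℕ → ℝ) (odd1 m)
    have hA : (16:ℝ)^(m+3) ≤ 4*((m:ℝ)+3)*C^2 := by
      have := central_sq (m+3) (by omega)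
      rw [centralBinom_eq m] at this
      push_cast at this ⊢
      convert this using 2 <;> push_cast <;> ring
    set P : ℝ := ((m:ℝ)+5)*((m:ℝ)+6) with hPdef
    set Q : ℝ := ((m:ℝ)+2)*((m:ℝ)+3) with hQdef
    have hR : C3 * P = C1 * Q := by
      rw [hC1def, hC3def, hPdef, hQdef]
      exact_mod_cast congrArg (Nat.cast : ℕ → ℝ) (odd2 m)
    have hP : (0:ℝ) < P := by rw [hPdef]; positivity
    have hQ : (0:ℝ) < Q := by rw [hQdef]; positivity
    have hmr : (0:ℝ) ≤ (m:ℝ) := Nat.cast_nonneg m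
    have h5 : P ≤ 5*Q := by rw [hPdef, hQdef]; nlinarith [hmr]
    have hkey : 36*P^2 ≤ 25*(P+Q)^2 := by
      nlinarith [mul_nonneg (by linarith : (0:ℝ) ≤ 5*Q-P) (by linarith : (0:ℝ) ≤ 5*Q+11*P)]
    have hnum : 800*((m:ℝ)+3)*((m:ℝ)+4)^2 < 113.04*(2*(m:ℝ)+7)^3 := by
      nlinarith [hmr, sq_nonneg ((m:ℝ)), pow_pos (show (0:ℝ) < (m:ℝ)+1 by linarith) 3]
    have hpoly : 32*((m:ℝ)+3)*((m:ℝ)+4)^2*P^2 < Real.pi*(2*(m:ℝ)+7)^3*(P+Q)^2 := by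
      have hc : (0:ℝ) < (2*(m:ℝ)+7)^3 := by positivity
      have s1 : Real.pi*(2*(m:ℝ)+7)^3*(36*P^2) ≤ Real.pi*(2*(m:ℝ)+7)^3*(25*(P+Q)^2) :=
        mul_le_mul_of_nonneg_left hkey (by positivity)
      have s2 : 113.04*(2*(m:ℝ)+7)^3*P^2 ≤ Real.pi*(2*(m:ℝ)+7)^3*(36*P^2) := by
        nlinarith [Real.pi_gt_d2, mul_pos hc (show (0:ℝ) < P^2 by positivity)]
      nlinarith [s1, s2, mul_lt_mul_of_pos_right hnum (show (0:ℝ) < P^2 by positivity)]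
    have hF2 : (0:ℝ) < (P*((m:ℝ)+4))^2 := by positivity
    apply lt_of_mul_lt_mul_right _ hF2.le
    have hSP : (C1 + C3) * (P*((m:ℝ)+4)) = C * (2*(m:ℝ)+7) * (P+Q) := by
      have : (C1 + C3) * P = C1 * (P+Q) := by linear_combination hR
      calc (C1 + C3) * (P*((m:ℝ)+4)) = ((C1+C3)*P) * ((m:ℝ)+4) := by ring
        _ = (C1*((m:ℝ)+4)) * (P+Q) := by rw [this]; ring
        _ = C * (2*(m:ℝ)+7) * (P+Q) := by rw [h1]
    have hrw : (Real.pi*((2*m+7:ℕ):ℝ)*(C1+C3)^2)*(P*((m:ℝ)+4))^2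
        = Real.pi*((2*m+7:ℕ):ℝ)*((C1+C3)*(P*((m:ℝ)+4)))^2 := by ring
    rw [hrw, hSP]
    have h16 : (4:ℝ)^(2*m+7) = 4*16^(m+3) := by
      rw [show 2*m+7 = 2*(m+3)+1 by ring, pow_succ, pow_mul]; norm_num; ring
    rw [h16]
    push_cast
    nlinarith [mul_le_mul_of_nonneg_right hA (show (0:ℝ) ≤ P^2*((m:ℝ)+4)^2 by positivity),
      mul_lt_mul_of_pos_left hpoly (show (0:ℝ) < C^2 by positivity),
      mul_pos hC hC]
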